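/- For every positive integer ℓ there exists a graph G such that e_𝒪(G) = 1 and η_𝒪(G) ≥ ℓ, where 𝒪 is the class of outerplanar graphs. Concretely, define G₁ = K₄ with P₁ a Hamiltonian path, and recursively (G_ℓ, P_ℓ) = σ(G_{ℓ−1}, P_{ℓ−1}); then e_𝒪(G_ℓ) = 1 and η_𝒪(G_ℓ) ≥ ℓ + 1. -/

import Mathlib

open Classical SimpleGraph

/-- A class of (simple) graphs: a predicate on graphs over every vertex type. -/
abbrev GraphClass : Type 1 := ∀ (V : Type), SimpleGraph V → Prop

/-- `C` is closed under isomorphism. -/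
def ClosedUnderIso (C : GraphClass) : Prop :=
  ∀ {V W : Type} (G : SimpleGraph V) (H : SimpleGraph W), Nonempty (G ≃g H) → C V G → C W H

/-- `C` is closed under taking subgraphs. -/
def ClosedUnderSubgraphs (C : GraphClass) : Prop :=
  ∀ {V : Type} (G : SimpleGraph V) (H : G.Subgraph), C V G → C ↥H.verts H.coe

/-- `C` is closed under taking disjoint unions. -/
def ClosedUnderDisjointUnion (C : GraphClass) : Prop :=
  ∀ {V W : Type} (G : SimpleGraph V) (H : SimpleGraph W),
    C V G → C W H → C (V ⊕ W) (G.sum H)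

/-- The edit distance from `G` to the (monotone) class `C`: the minimum number of
edges one needs to delete from `G` to obtain a graph in `C` (`⊤` if impossible). -/
noncomputable def editDist (C : GraphClass) {V : Type} (G : SimpleGraph V) : ℕ∞ :=
  sInf {n : ℕ∞ | ∃ F : Set (Sym2 V), F ⊆ G.edgeSet ∧ C V (G.deleteEdges F) ∧ (F.ncard : ℕ∞) = n}

/-- The set of edges of `G` whose two ends receive distinct labels under `f`. -/
def crossEdges {V : Type} (G : SimpleGraph V) (f : V → ℕ) : Set (Sym2 V) :=
  {e | e ∈ G.edgeSet ∧ ∃ u v : V, e = s(u, v) ∧ f u ≠ f v}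

/-- The `C`-edge-brittleness of `G`: the minimum, over partitions of `V(G)`
(given as labellings `f : V → ℕ`) all of whose parts induce subgraphs in `C`,
of the number of edges with ends in distinct parts. -/
noncomputable def edgeBrittleness (C : GraphClass) {V : Type} (G : SimpleGraph V) : ℕ∞ :=
  sInf {n : ℕ∞ | ∃ f : V → ℕ,
    (∀ i : ℕ, C ↥(f ⁻¹' {i}) (G.induce (f ⁻¹' {i}))) ∧ ((crossEdges G f).ncard : ℕ∞) = n}

/-- Given a labelling `g` of the edges of `G`, the set of vertices incident with
edges in two distinct parts. -/
def brittleVertices {V : Type} (G : SimpleGraph V) (g : Sym2 V → ℕ) : Set V :=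
  {v | ∃ e₁ e₂ : Sym2 V, e₁ ∈ G.edgeSet ∧ e₂ ∈ G.edgeSet ∧ v ∈ e₁ ∧ v ∈ e₂ ∧ g e₁ ≠ g e₂}

/-- The vertices incident with an edge of `G` in part `i` of the edge labelling `g`. -/
def partSupport {V : Type} (G : SimpleGraph V) (g : Sym2 V → ℕ) (i : ℕ) : Set V :=
  {v | ∃ e ∈ G.edgeSet, g e = i ∧ v ∈ e}

/-- The subgraph of `G` induced by the edges in part `i` of the edge labelling `g`
(on its own vertex set: the vertices incident with those edges). -/
def partGraph {V : Type} (G : SimpleGraph V) (g : Sym2 V → ℕ) (i : ℕ) :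
    SimpleGraph ↥(partSupport G g i) :=
  (SimpleGraph.fromEdgeSet {e | e ∈ G.edgeSet ∧ g e = i}).induce (partSupport G g i)

/-- The `C`-vertex-brittleness of `G`: the minimum, over partitions of `E(G)`
(given as labellings `g : Sym2 V → ℕ`) all of whose parts induce subgraphs in `C`,
of the number of vertices incident with edges in distinct parts. -/
noncomputable def vertexBrittleness (C : GraphClass) {V : Type} (G : SimpleGraph V) : ℕ∞ :=
  sInf {n : ℕ∞ | ∃ g : Sym2 V → ℕ,
    (∀ i : ℕ, C ↥(partSupport G g i) (partGraph G g i)) ∧ ((brittleVertices G g).ncard : ℕ∞) = n}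

/-- The `C̄`-capacity of `G`: the maximum number of pairwise edge-disjoint subgraphs
of `G`, none of which belongs to `C`. -/
noncomputable def capacity (C : GraphClass) {V : Type} (G : SimpleGraph V) : ℕ∞ :=
  sSup {n : ℕ∞ | ∃ m : ℕ, (m : ℕ∞) = n ∧ ∃ H : Fin m → G.Subgraph,
    (∀ i j, i ≠ j → Disjoint (H i).edgeSet (H j).edgeSet) ∧
    (∀ i, ¬ C ↥(H i).verts (H i).coe)}

/-- The graph obtained from `G` by subdividing the edge `uv` once, using a new vertex. -/
def subdivideEdge {V : Type} (G : SimpleGraph V) (u v : V) : SimpleGraph (V ⊕ Unit) :=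
  SimpleGraph.fromRel fun x y =>
    (∃ a b : V, x = Sum.inl a ∧ y = Sum.inl b ∧ G.Adj a b ∧ s(a, b) ≠ s(u, v)) ∨
    (∃ a : V, x = Sum.inl a ∧ y = Sum.inr () ∧ (a = u ∨ a = v))

/-- A graph bundled with its vertex type. -/
def FGraph : Type 1 := Σ V : Type, SimpleGraph V

/-- `IsSubdivision G H` means `H` is (isomorphic to) a subdivision of `G`. -/
inductive IsSubdivision : FGraph → FGraph → Prop
  | of_iso {V W : Type} (G : SimpleGraph V) (H : SimpleGraph W) :
      Nonempty (G ≃g H) → IsSubdivision ⟨V, G⟩ ⟨W, H⟩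
  | step {V : Type} (G : SimpleGraph V) {u v : V} (h : G.Adj u v) (H : FGraph) :
      IsSubdivision ⟨V ⊕ Unit, subdivideEdge G u v⟩ H → IsSubdivision ⟨V, G⟩ H

/-- `H` is a topological minor of `G`: some subgraph of `G` is isomorphic to a
subdivision of `H`. -/
def IsTopMinor {W V : Type} (H : SimpleGraph W) (G : SimpleGraph V) : Prop :=
  ∃ S : G.Subgraph, IsSubdivision ⟨W, H⟩ ⟨↥S.verts, S.coe⟩

/-- An ideal: a class of graphs closed under isomorphism and topological minors. -/
def IsIdeal (C : GraphClass) : Prop :=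
  ClosedUnderIso C ∧
  ∀ {V W : Type} (G : SimpleGraph V) (H : SimpleGraph W), IsTopMinor H G → C V G → C W H

/-- The image of vertex `v` in the `i`-th copy of `G` inside `Fan(G,S,k)`. -/
noncomputable def fanMap {V : Type} (S : Set V) (k : ℕ) (i : Fin k) (v : V) :
    ↥S ⊕ (↥(Sᶜ : Set V) × Fin k) :=
  if h : v ∈ S then Sum.inl ⟨v, h⟩ else Sum.inr (⟨v, h⟩, i)

/-- `Fan G S k`: the graph obtained from `k` vertex-disjoint copies of `G` by
identifying, for each `v ∈ S`, all copies of `v` (and the copies of each edge of `G[S]`). -/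
noncomputable def Fan {V : Type} (G : SimpleGraph V) (S : Set V) (k : ℕ) :
    SimpleGraph (↥S ⊕ (↥(Sᶜ : Set V) × Fin k)) :=
  SimpleGraph.fromRel fun x y =>
    ∃ (i : Fin k) (a b : V), G.Adj a b ∧ x = fanMap S k i a ∧ y = fanMap S k i b

/-- The triangle `K₃`. -/
def K3 : SimpleGraph (Fin 3) := ⊤

/-- The complete graph `K₄`. -/
def K4 : SimpleGraph (Fin 4) := ⊤

/-- The complete bipartite graph `K_{2,n}`. -/
def K2n (n : ℕ) : SimpleGraph (Fin 2 ⊕ Fin n) := completeBipartiteGraph (Fin 2) (Fin n)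

/-- The complete bipartite graph `K_{2,3}`. -/
def K23 : SimpleGraph (Fin 2 ⊕ Fin 3) := completeBipartiteGraph (Fin 2) (Fin 3)

/-- The diamond `D = K₄ ∖ e`. -/
def Diamond : SimpleGraph (Fin 4) := (⊤ : SimpleGraph (Fin 4)).deleteEdges {s((0 : Fin 4), 1)}

/-- `K⁺_{2,3}`: `K_{2,3}` together with an edge joining the two degree-3 vertices. -/
def K23plus : SimpleGraph (Fin 2 ⊕ Fin 3) :=
  K23 ⊔ SimpleGraph.fromEdgeSet {s(Sum.inl 0, Sum.inl 1)}

/-- `W⁺_k`: the cycle on `2k` vertices together with a hub adjacent to the `k`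
vertices in even position (the wheel with all rim edges subdivided). -/
def Wplus (k : ℕ) : SimpleGraph (Option (ZMod (2 * k))) :=
  SimpleGraph.fromRel fun x y =>
    (∃ a : ZMod (2 * k), x = some a ∧ y = some (a + 1)) ∨
    (∃ a : ZMod (2 * k), x = none ∧ y = some a ∧ a.val % 2 = 0)

/-- An `H`-snare: a pair `(J,S)` with `H` a topological minor of `J`, `S` independent
in `J`, and `J ∖ S` connected. -/
def IsSnare {W V : Type} (H : SimpleGraph W) (J : SimpleGraph V) (S : Set V) : Prop :=
  IsTopMinor H J ∧ (∀ a ∈ S, ∀ b ∈ S, ¬ J.Adj a b) ∧ (J.induce Sᶜ).Connected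

/-- Suppressing the vertex `v` in `J`: delete `v`, joining its (at most two) neighbours;
for a degree 2 vertex `v` this is the contraction `J/v` of an edge incident with `v`. -/
def suppress {V : Type} (J : SimpleGraph V) (v : V) : SimpleGraph ↥({v}ᶜ : Set V) :=
  SimpleGraph.fromRel fun x y => J.Adj ↑x ↑y ∨ (J.Adj ↑x v ∧ J.Adj v ↑y)

/-- An `H`-trap: a minimal `H`-snare. -/
def IsTrap {W V : Type} (H : SimpleGraph W) (J : SimpleGraph V) (S : Set V) : Prop :=
  IsSnare H J S ∧
  (∀ J' : J.Subgraph, J' ≠ ⊤ → ¬ IsSnare H J'.coe {x : ↥J'.verts | ↑x ∈ S}) ∧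
  (∀ v : V, v ∉ S → (J.neighborSet v).ncard = 2 →
    ¬ IsSnare H (suppress J v) {x : ↥({v}ᶜ : Set V) | ↑x ∈ S})

/-- `G` has a tree-decomposition of width at most `w`. -/
def HasTreewidthLE {V : Type} (G : SimpleGraph V) (w : ℕ) : Prop :=
  ∃ (ι : Type) (_ : Fintype ι) (T : SimpleGraph ι) (β : ι → Set V),
    T.IsTree ∧
    (∀ u v : V, G.Adj u v → ∃ t : ι, u ∈ β t ∧ v ∈ β t) ∧
    (∀ v : V, (T.induce {t | v ∈ β t}).Connected) ∧
    (∀ t : ι, (β t).ncard ≤ w + 1)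

/-- A graph is 2-connected if it has more than 2 vertices and remains connected
after deleting any single vertex. -/
def TwoConnected {V : Type} (G : SimpleGraph V) : Prop :=
  2 < Nat.card V ∧ ∀ v : V, (G.induce {x | x ≠ v}).Connected

/-- The class of forests. -/
def ForestClass : GraphClass := fun _ G => G.IsAcyclic

/-- Outerplanar graphs: the graphs with no topological minor isomorphic to `K₄`
or `K_{2,3}`. -/
def Outerplanar {V : Type} (G : SimpleGraph V) : Prop :=
  ¬ IsTopMinor K4 G ∧ ¬ IsTopMinor K23 G

/-- The class of outerplanar graphs. -/
def OuterplanarClass : GraphClass := fun _ G => Outerplanar G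

/-- The graph of `σ(G,P)`: for the path (walk) `P = v₀v₁⋯v_m`, add new vertices
`u₀,…,u_{m-1}`, where `uᵢ` is adjacent exactly to `vᵢ` and `v_{i+1}`. -/
def sigmaGraph {V : Type} (G : SimpleGraph V) {a b : V} (P : G.Walk a b) :
    SimpleGraph (V ⊕ Fin P.length) :=
  SimpleGraph.fromRel fun x y =>
    (∃ p q : V, x = Sum.inl p ∧ y = Sum.inl q ∧ G.Adj p q) ∨
    (∃ (p : V) (i : Fin P.length), x = Sum.inl p ∧ y = Sum.inr i ∧
      (p = P.getVert i ∨ p = P.getVert (i + 1)))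

/-- The new path `P'` of `σ(G,P)` (from the `j`-th vertex of `P` on). -/
noncomputable def sigmaWalk {V : Type} (G : SimpleGraph V) {a b : V} (P : G.Walk a b)
    (j : ℕ) (h : j ≤ P.length) :
    (sigmaGraph G P).Walk (Sum.inl (P.getVert j)) (Sum.inl b) :=
  if hj : j = P.length then
    SimpleGraph.Walk.nil.copy (by rw [hj, SimpleGraph.Walk.getVert_length]) rfl
  else by
    have hlt : j < P.length := lt_of_le_of_ne h hj
    have adj1 : (sigmaGraph G P).Adj (Sum.inl (P.getVert j)) (Sum.inr ⟨j, hlt⟩) :=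
      ⟨by simp, Or.inl (Or.inr ⟨P.getVert j, ⟨j, hlt⟩, rfl, rfl, Or.inl rfl⟩)⟩
    have adj2 : (sigmaGraph G P).Adj (Sum.inr ⟨j, hlt⟩) (Sum.inl (P.getVert (j + 1))) :=
      ⟨by simp, Or.inr (Or.inr ⟨P.getVert (j + 1), ⟨j, hlt⟩, rfl, rfl, Or.inr rfl⟩)⟩
    exact SimpleGraph.Walk.cons adj1 (SimpleGraph.Walk.cons adj2 (sigmaWalk G P (j + 1) hlt))
  termination_by P.length - j
  decreasing_by omega

/-- A hemmed graph: a graph together with a walk in it. -/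
structure HGraph where
  V : Type
  G : SimpleGraph V
  a : V
  b : V
  P : G.Walk a b

/-- The operation `σ` on hemmed graphs. -/
noncomputable def HGraph.step (X : HGraph) : HGraph :=
  ⟨X.V ⊕ Fin X.P.length, sigmaGraph X.G X.P, Sum.inl X.a, Sum.inl X.b,
    (sigmaWalk X.G X.P 0 (Nat.zero_le _)).copy
      (by rw [SimpleGraph.Walk.getVert_zero]) rfl⟩

/-- Adding to `G` a new (apex) vertex adjacent exactly to the vertices in `X`. -/
def AddApex {V : Type} (G : SimpleGraph V) (X : Set V) : SimpleGraph (V ⊕ Unit) :=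
  SimpleGraph.fromRel fun x y =>
    (∃ p q : V, x = Sum.inl p ∧ y = Sum.inl q ∧ G.Adj p q) ∨
    (∃ p : V, x = Sum.inl p ∧ y = Sum.inr () ∧ p ∈ X)

/-- A hemmed graph `(G,P)` is outerplanar: `G` has an outerplanar drawing with `P`
on the boundary of the outer face; equivalently, the graph obtained by adding a new
vertex adjacent to all vertices of `P` is outerplanar. -/
def HemmedOuterplanar {V : Type} (G : SimpleGraph V) {a b : V} (P : G.Walk a b) : Prop :=
  Outerplanar (AddApex G {v | v ∈ P.support})

section OnePageMachinery

/-- The non-crossing condition for a linear layout `f`. -/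
def NonCross {V : Type} (G : SimpleGraph V) (f : V → ℚ) : Prop :=
  ∀ a b c d : V, G.Adj a b → G.Adj c d → ¬ (f a < f c ∧ f c < f b ∧ f b < f d)

/-- A one-page book embedding: an injective linear layout with no crossing edges. -/
def OnePage {V : Type} (G : SimpleGraph V) : Prop :=
  ∃ f : V → ℚ, Function.Injective f ∧ NonCross G f

lemma onePage_of_iso {V W : Type} (G : SimpleGraph V) (H : SimpleGraph W) (e : G ≃g H)
    (h : OnePage H) : OnePage G := by
  obtain ⟨f, hinj, hnc⟩ := h
  refine ⟨f ∘ e, hinj.comp e.toEquiv.injective, ?_⟩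
  intro a b c d hab hcd
  exact hnc (e a) (e b) (e c) (e d) (e.map_adj_iff.mpr hab) (e.map_adj_iff.mpr hcd)

lemma onePage_subgraph {V : Type} {G : SimpleGraph V} (S : G.Subgraph) (h : OnePage G) :
    OnePage S.coe := by
  obtain ⟨f, hinj, hnc⟩ := h
  refine ⟨f ∘ Subtype.val, hinj.comp Subtype.val_injective, ?_⟩
  intro a b c d hab hcd
  exact hnc a b c d (S.adj_sub hab) (S.adj_sub hcd)

lemma onePage_of_subdivide {V : Type} (G : SimpleGraph V) (u v : V) (huv : G.Adj u v)
    (h : OnePage (subdivideEdge G u v)) : OnePage G := by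
  classical
  obtain ⟨f, hinj, hnc⟩ := h
  refine ⟨f ∘ Sum.inl, hinj.comp Sum.inl_injective, ?_⟩
  have hSe : ∀ p q : V, G.Adj p q → s(p, q) ≠ s(u, v) →
      (subdivideEdge G u v).Adj (Sum.inl p) (Sum.inl q) := by
    intro p q hpq hne
    rw [subdivideEdge, SimpleGraph.fromRel_adj]
    exact ⟨by simp [hpq.ne], Or.inl (Or.inl ⟨p, q, rfl, rfl, hpq, hne⟩)⟩
  have hSw : ∀ p : V, (p = u ∨ p = v) →
      (subdivideEdge G u v).Adj (Sum.inl p) (Sum.inr ()) := by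
    intro p hp
    rw [subdivideEdge, SimpleGraph.fromRel_adj]
    exact ⟨by simp, Or.inl (Or.inr ⟨p, rfl, rfl, hp⟩)⟩
  intro a b c d hab hcd hpat
  obtain ⟨h1, h2, h3⟩ := hpat
  simp only [Function.comp_apply] at h1 h2 h3
  by_cases hab' : s(a, b) = s(u, v)
  · by_cases hcd' : s(c, d) = s(u, v)
    · -- both the same edge: contradicts strict inequalities
      rw [← hcd'] at hab'
      rcases Sym2.eq_iff.mp hab' with ⟨rfl, rfl⟩ | ⟨rfl, rfl⟩
      · exact absurd h2 (by linarith)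
      · exact absurd h2 (by linarith)
    · -- {a,b} = {u,v}
      have hau : a = u ∨ a = v := by
        rcases Sym2.eq_iff.mp hab' with ⟨rfl, rfl⟩ | ⟨rfl, rfl⟩ <;> simp
      have hbu : b = u ∨ b = v := by
        rcases Sym2.eq_iff.mp hab' with ⟨rfl, rfl⟩ | ⟨rfl, rfl⟩ <;> simp
      have Eaw := hSw a hau
      have Ebw := hSw b hbu
      have Ecd := hSe c d hcd hcd'
      set t := f (Sum.inr ()) with ht
      rcases lt_trichotomy t (f (Sum.inl c)) with hlt | heq | hgt
      · exact hnc (Sum.inr ()) (Sum.inl b) (Sum.inl c) (Sum.inl d) Ebw.symm Ecd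
          ⟨hlt, h2, h3⟩
      · exact absurd heq (hinj.ne (by simp))
      · rcases lt_trichotomy t (f (Sum.inl d)) with hlt2 | heq2 | hgt2
        · exact hnc (Sum.inl a) (Sum.inr ()) (Sum.inl c) (Sum.inl d) Eaw Ecd
            ⟨h1, hgt, hlt2⟩
        · exact absurd heq2 (hinj.ne (by simp))
        · exact hnc (Sum.inl c) (Sum.inl d) (Sum.inl b) (Sum.inr ()) Ecd Ebw
            ⟨h2, h3, hgt2⟩
  · by_cases hcd' : s(c, d) = s(u, v)
    · have hcu : c = u ∨ c = v := by
        rcases Sym2.eq_iff.mp hcd' with ⟨rfl, rfl⟩ | ⟨rfl, rfl⟩ <;> simp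
      have hdu : d = u ∨ d = v := by
        rcases Sym2.eq_iff.mp hcd' with ⟨rfl, rfl⟩ | ⟨rfl, rfl⟩ <;> simp
      have Ecw := hSw c hcu
      have Edw := hSw d hdu
      have Eab := hSe a b hab hab'
      set t := f (Sum.inr ()) with ht
      rcases lt_trichotomy t (f (Sum.inl a)) with hlt | heq | hgt
      · exact hnc (Sum.inr ()) (Sum.inl c) (Sum.inl a) (Sum.inl b) Ecw.symm Eab
          ⟨hlt, h1, h2⟩
      · exact absurd heq (hinj.ne (by simp))
      · rcases lt_trichotomy t (f (Sum.inl b)) with hlt2 | heq2 | hgt2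
        · exact hnc (Sum.inl a) (Sum.inl b) (Sum.inr ()) (Sum.inl d) Eab Edw.symm
            ⟨hgt, hlt2, h3⟩
        · exact absurd heq2 (hinj.ne (by simp))
        · exact hnc (Sum.inl a) (Sum.inl b) (Sum.inl c) (Sum.inr ()) Eab Ecw
            ⟨h1, h2, hgt2⟩
    · exact hnc (Sum.inl a) (Sum.inl b) (Sum.inl c) (Sum.inl d) (hSe a b hab hab')
        (hSe c d hcd hcd') ⟨h1, h2, h3⟩

lemma onePage_of_isSubdivision :
    ∀ {A B : FGraph}, IsSubdivision A B → OnePage B.2 → OnePage A.2 := by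
  intro A B h
  induction h with
  | of_iso G H e =>
    intro hH
    exact onePage_of_iso G H (Classical.choice e) hH
  | step G hadj H hsub ih =>
    intro hH
    exact onePage_of_subdivide G _ _ hadj (ih hH)

lemma isSubdivision_trans_iso :
    ∀ {A B : FGraph}, IsSubdivision A B → ∀ {W' : Type} (H' : SimpleGraph W'),
      Nonempty (B.2 ≃g H') → IsSubdivision A ⟨W', H'⟩ := by
  intro A B h
  induction h with
  | of_iso G H e =>
    intro W' H' e'
    exact .of_iso _ _ ⟨(Classical.choice e).trans (Classical.choice e')⟩
  | step G hadj H hsub ih =>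
    intro W' H' e'
    exact .step _ hadj _ (ih _ e')

end OnePageMachinery
section TopMinor

lemma isTopMinor_mono {U V W : Type} {K : SimpleGraph U} {H : SimpleGraph V}
    {G : SimpleGraph W} (φ : H →g G) (hφ : Function.Injective φ)
    (h : IsTopMinor K H) : IsTopMinor K G := by
  obtain ⟨S, hS⟩ := h
  refine ⟨S.map φ, isSubdivision_trans_iso hS _ ⟨?_⟩⟩
  refine ⟨(Equiv.Set.image φ S.verts hφ), ?_⟩
  rintro ⟨x, hx⟩ ⟨y, hy⟩
  simp only [SimpleGraph.Subgraph.coe_adj, Equiv.Set.image, Equiv.Set.imageOfInjOn,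
    Subgraph.map_adj, Relation.Map]
  constructor
  · rintro ⟨a, b, hab, ha, hb⟩
    have : a = x := hφ ha
    have : b = y := hφ hb
    subst ‹a = x›; subst ‹b = y›
    exact hab
  · intro hxy
    exact ⟨x, y, hxy, rfl, rfl⟩

lemma isTopMinor_K4_self : IsTopMinor K4 K4 :=
  ⟨⊤, .of_iso _ _ ⟨SimpleGraph.Subgraph.topIso.symm⟩⟩

lemma outerplanar_mono {V W : Type} {H : SimpleGraph V} {G : SimpleGraph W}
    (φ : H →g G) (hφ : Function.Injective φ) (h : Outerplanar G) : Outerplanar H :=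
  ⟨fun hk => h.1 (isTopMinor_mono φ hφ hk), fun hk => h.2 (isTopMinor_mono φ hφ hk)⟩

lemma not_outerplanar_of_K4_hom {W : Type} {G : SimpleGraph W} (ι : Fin 4 → W)
    (hinj : Function.Injective ι) (hadj : ∀ a b : Fin 4, a ≠ b → G.Adj (ι a) (ι b)) :
    ¬ Outerplanar G := by
  intro hG
  refine hG.1 (isTopMinor_mono ⟨ι, ?_⟩ hinj isTopMinor_K4_self)
  intro a b hab
  exact hadj a b (by rwa [K4, SimpleGraph.top_adj] at hab)

end TopMinor

section Refute

/-- In any injective layout of `n` points there is an increasing enumeration. -/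
lemma exists_mono_enum {n : ℕ} (f : Fin n → ℚ) (hf : Function.Injective f) :
    ∃ a : Fin n → Fin n, Function.Injective a ∧ StrictMono (f ∘ a) := by
  classical
  have hcard : (Finset.univ.image f).card = n := by
    rw [Finset.card_image_of_injective _ hf, Finset.card_univ, Fintype.card_fin]
  let e := (Finset.univ.image f).orderIsoOfFin hcard
  have hmem : ∀ i : Fin n, (e i : ℚ) ∈ Finset.univ.image f := fun i => (e i).2
  choose a ha using fun i => Finset.mem_image.mp (hmem i)
  refine ⟨a, ?_, ?_⟩
  · intro i j hij
    have : (e i : ℚ) = (e j : ℚ) := by rw [← (ha i).2, ← (ha j).2, hij]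
    exact e.injective (Subtype.ext this)
  · intro i j hij
    have := e.strictMono hij
    rw [← Subtype.coe_lt_coe] at this
    simpa only [Function.comp_apply, (ha i).2, (ha j).2] using this

lemma not_onePage_K4 : ¬ OnePage K4 := by
  rintro ⟨f, hinj, hnc⟩
  obtain ⟨a, hainj, hmono⟩ := exists_mono_enum f hinj
  have h01 : f (a 0) < f (a 1) := hmono (by decide)
  have h12 : f (a 1) < f (a 2) := hmono (by decide)
  have h23 : f (a 2) < f (a 3) := hmono (by decide)
  have had : ∀ i j : Fin 4, i ≠ j → K4.Adj (a i) (a j) := by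
    intro i j hij
    rw [K4, SimpleGraph.top_adj]
    exact fun h => hij (hainj h)
  exact hnc (a 0) (a 2) (a 1) (a 3) (had 0 2 (by decide)) (had 1 3 (by decide))
    ⟨h01, h12, h23⟩

lemma nonCross_neg {V : Type} {G : SimpleGraph V} {f : V → ℚ} (h : NonCross G f) :
    NonCross G (fun v => -f v) := by
  intro a b c d hab hcd hpat
  obtain ⟨h1, h2, h3⟩ := hpat
  dsimp only at h1 h2 h3
  exact h d c b a hcd.symm hab.symm ⟨by linarith, by linarith, by linarith⟩

lemma K23_adj (i : Fin 2) (j : Fin 3) : K23.Adj (Sum.inl i) (Sum.inr j) := by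
  simp [K23]

lemma K23_case (f : Fin 2 ⊕ Fin 3 → ℚ) (hinj : Function.Injective f)
    (hnc : NonCross K23 f) (l m r : Fin 3)
    (hlm : f (Sum.inr l) < f (Sum.inr m)) (hmr : f (Sum.inr m) < f (Sum.inr r))
    (i j : Fin 2) (hij : i ≠ j) (hA : f (Sum.inl i) < f (Sum.inr m)) : False := by
  set a := f (Sum.inl i)
  set b := f (Sum.inl j)
  have hab : a ≠ b := fun h => hij (Sum.inl_injective (hinj h))
  rcases lt_trichotomy b (f (Sum.inr m)) with hb | hb | hb
  · rcases lt_or_gt_of_ne hab with h' | h'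
    · exact hnc (Sum.inl i) (Sum.inr m) (Sum.inl j) (Sum.inr r) (K23_adj i m)
        (K23_adj j r) ⟨h', hb, hmr⟩
    · exact hnc (Sum.inl j) (Sum.inr m) (Sum.inl i) (Sum.inr r) (K23_adj j m)
        (K23_adj i r) ⟨h', hA, hmr⟩
  · exact absurd hb (hinj.ne (by simp))
  · rcases lt_trichotomy (f (Sum.inr r)) b with hr | hr | hr
    · exact hnc (Sum.inl i) (Sum.inr r) (Sum.inr m) (Sum.inl j) (K23_adj i r)
        (K23_adj j m).symm ⟨hA, hmr, hr⟩
    · exact absurd hr (hinj.ne (by simp))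
    · rcases lt_trichotomy (f (Sum.inr l)) a with hl | hl | hl
      · exact hnc (Sum.inr l) (Sum.inl j) (Sum.inl i) (Sum.inr r) (K23_adj j l).symm
          (K23_adj i r) ⟨hl, hA.trans hb, hr⟩
      · exact absurd hl (hinj.ne (by simp))
      · exact hnc (Sum.inl i) (Sum.inr m) (Sum.inr l) (Sum.inl j) (K23_adj i m)
          (K23_adj j l).symm ⟨hl, hlm, hb⟩

lemma not_onePage_K23 : ¬ OnePage K23 := by
  rintro ⟨f, hinj, hnc⟩
  have hinj3 : Function.Injective (fun j : Fin 3 => f (Sum.inr j)) :=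
    fun x y h => Sum.inr_injective (hinj h)
  obtain ⟨a, hainj, hmono⟩ := exists_mono_enum _ hinj3
  have h01 : f (Sum.inr (a 0)) < f (Sum.inr (a 1)) := hmono (by decide)
  have h12 : f (Sum.inr (a 1)) < f (Sum.inr (a 2)) := hmono (by decide)
  rcases lt_trichotomy (f (Sum.inl 0)) (f (Sum.inr (a 1))) with h | h | h
  · exact K23_case f hinj hnc (a 0) (a 1) (a 2) h01 h12 0 1 (by decide) h
  · exact absurd h (hinj.ne (by simp))
  · have hinj' : Function.Injective (fun v => -f v) := by
      intro x y hxy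
      exact hinj (by simpa using congrArg Neg.neg hxy)
    exact K23_case _ hinj' (nonCross_neg hnc) (a 2) (a 1) (a 0)
      (by simpa using h12) (by simpa using h01) 0 1 (by decide) (by simpa using h)

lemma onePage_outerplanar {V : Type} {G : SimpleGraph V} (h : OnePage G) :
    Outerplanar G := by
  constructor
  · rintro ⟨S, hS⟩
    exact not_onePage_K4 (onePage_of_isSubdivision hS (onePage_subgraph S h))
  · rintro ⟨S, hS⟩
    exact not_onePage_K23 (onePage_of_isSubdivision hS (onePage_subgraph S h))

end Refute
section SigmaWalk

variable {V : Type} (G : SimpleGraph V) {a b : V} (P : G.Walk a b)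

lemma sigmaWalk_eq_cons (j : ℕ) (h : j ≤ P.length) (hj : ¬ j = P.length) :
    sigmaWalk G P j h = SimpleGraph.Walk.cons (v := Sum.inr ⟨j, by omega⟩)
      (by rw [sigmaGraph, SimpleGraph.fromRel_adj]
          exact ⟨by simp, Or.inl (Or.inr ⟨P.getVert j, ⟨j, by omega⟩, rfl, rfl, Or.inl rfl⟩)⟩)
      (SimpleGraph.Walk.cons
        (by rw [sigmaGraph, SimpleGraph.fromRel_adj]
            exact ⟨by simp, Or.inr (Or.inr ⟨P.getVert (j + 1), ⟨j, by omega⟩, rfl, rfl, Or.inr rfl⟩)⟩)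
        (sigmaWalk G P (j + 1) (by omega))) := by
  rw [sigmaWalk, dif_neg hj]

lemma sigmaWalk_length : ∀ (n j : ℕ) (h : j ≤ P.length), P.length - j = n →
    (sigmaWalk G P j h).length = 2 * n := by
  intro n
  induction n with
  | zero =>
    intro j h hn
    have hj : j = P.length := by omega
    rw [sigmaWalk]
    rw [dif_pos hj]
    simp
  | succ n ih =>
    intro j h hn
    have hj : ¬ j = P.length := by omega
    rw [sigmaWalk_eq_cons G P j h hj]
    simp only [SimpleGraph.Walk.length_cons, ih (j + 1) (by omega) (by omega)]
    ring

lemma sigmaWalk_getVert_even : ∀ (m j : ℕ) (h : j ≤ P.length), j + m ≤ P.length →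
    (sigmaWalk G P j h).getVert (2 * m) = Sum.inl (P.getVert (j + m)) := by
  intro m
  induction m with
  | zero =>
    intro j h hm
    simp [SimpleGraph.Walk.getVert_zero]
  | succ m ih =>
    intro j h hm
    have hj : ¬ j = P.length := by omega
    rw [sigmaWalk_eq_cons G P j h hj]
    have : 2 * (m + 1) = (2 * m) + 1 + 1 := by ring
    rw [this, SimpleGraph.Walk.getVert_cons_succ, SimpleGraph.Walk.getVert_cons_succ,
      ih (j + 1) (by omega) (by omega)]
    congr 2
    omega

lemma sigmaWalk_getVert_odd : ∀ (m j : ℕ) (h : j ≤ P.length) (hm : j + m < P.length),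
    (sigmaWalk G P j h).getVert (2 * m + 1) = Sum.inr ⟨j + m, hm⟩ := by
  intro m
  induction m with
  | zero =>
    intro j h hm
    have hj : ¬ j = P.length := by omega
    rw [sigmaWalk_eq_cons G P j h hj]
    simp [SimpleGraph.Walk.getVert_cons_succ, SimpleGraph.Walk.getVert_zero]
  | succ m ih =>
    intro j h hm
    have hj : ¬ j = P.length := by omega
    rw [sigmaWalk_eq_cons G P j h hj]
    have : 2 * (m + 1) + 1 = (2 * m + 1) + 1 + 1 := by ring
    rw [this, SimpleGraph.Walk.getVert_cons_succ, SimpleGraph.Walk.getVert_cons_succ,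
      ih (j + 1) (by omega) (by omega)]
    congr 1
    ext
    simp
    omega

lemma step_length (X : HGraph) : X.step.P.length = 2 * X.P.length := by
  obtain ⟨V, G, a, b, P⟩ := X
  show ((sigmaWalk G P 0 (Nat.zero_le _)).copy _ rfl).length = _
  erw [SimpleGraph.Walk.length_copy]
  rw [sigmaWalk_length G P P.length 0 (Nat.zero_le _) (by omega)]

lemma step_getVert_even (X : HGraph) (m : ℕ) (hm : m ≤ X.P.length) :
    X.step.P.getVert (2 * m) = Sum.inl (X.P.getVert m) := by
  obtain ⟨V, G, a, b, P⟩ := X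
  have hm' : m ≤ P.length := hm
  show ((sigmaWalk G P 0 (Nat.zero_le _)).copy _ rfl).getVert (2 * m) = _
  erw [SimpleGraph.Walk.getVert_copy]
  rw [sigmaWalk_getVert_even G P m 0 (Nat.zero_le _) (by omega)]
  simp

lemma step_getVert_odd (X : HGraph) (m : ℕ) (hm : m < X.P.length) :
    X.step.P.getVert (2 * m + 1) = Sum.inr ⟨m, hm⟩ := by
  obtain ⟨V, G, a, b, P⟩ := X
  have hm' : m < P.length := hm
  show ((sigmaWalk G P 0 (Nat.zero_le _)).copy _ rfl).getVert (2 * m + 1) = _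
  erw [SimpleGraph.Walk.getVert_copy]
  rw [sigmaWalk_getVert_odd G P m 0 (Nat.zero_le _) (by omega)]
  simp

end SigmaWalk
section GoodInvariant

/-- getVert is injective on the index range of a path. -/
lemma path_getVert_inj {V : Type} {G : SimpleGraph V} {a b : V} {p : G.Walk a b}
    (hp : p.IsPath) : ∀ i, i ≤ p.length → ∀ j, j ≤ p.length →
      p.getVert i = p.getVert j → i = j := by
  induction p with
  | nil => intro i hi j hj _; simp at hi hj; omega
  | cons h q ih =>
    rw [SimpleGraph.Walk.cons_isPath_iff] at hp
    intro i hi j hj heq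
    match i, j with
    | 0, 0 => rfl
    | 0, j + 1 =>
      exfalso
      rw [SimpleGraph.Walk.getVert_zero, SimpleGraph.Walk.getVert_cons_succ] at heq
      exact hp.2 (SimpleGraph.Walk.mem_support_iff_exists_getVert.mpr
        ⟨j, heq.symm, by simpa using hj⟩)
    | i + 1, 0 =>
      exfalso
      rw [SimpleGraph.Walk.getVert_zero, SimpleGraph.Walk.getVert_cons_succ] at heq
      exact hp.2 (SimpleGraph.Walk.mem_support_iff_exists_getVert.mpr
        ⟨i, heq, by simpa using hi⟩)
    | i + 1, j + 1 =>
      rw [SimpleGraph.Walk.getVert_cons_succ, SimpleGraph.Walk.getVert_cons_succ] at heq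
      have := ih hp.1 i (by simpa using hi) j (by simpa using hj) heq
      omega

/-- The gap-free monotone layout condition along the hem walk. -/
def GapFreeMono (X : HGraph) (f : X.V → ℚ) : Prop :=
  ∀ j, j < X.P.length → f (X.P.getVert j) < f (X.P.getVert (j + 1)) ∧
    ∀ w : X.V, ¬ (f (X.P.getVert j) < f w ∧ f w < f (X.P.getVert (j + 1)))

/-- The inductive invariant for the hemmed graphs `G_ℓ`. -/
def Good (X : HGraph) : Prop :=
  Nonempty (Fintype X.V) ∧
  (∃ ι : Fin 4 → X.V, Function.Injective ι ∧ (∀ a b : Fin 4, a ≠ b → X.G.Adj (ι a) (ι b)) ∧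
    ∀ a : Fin 4, ∃ j, j ≤ X.P.length ∧ X.P.getVert j = ι a) ∧
  (∃ a₀ b₀ : X.V, X.G.Adj a₀ b₀ ∧ ∃ f : X.V → ℚ, Function.Injective f ∧
    NonCross (X.G.deleteEdges {s(a₀, b₀)}) f ∧ GapFreeMono X f)

lemma good_mk {V : Type} (G : SimpleGraph V) {a b : V} (P : G.Walk a b)
    (h1 : Nonempty (Fintype V))
    (h2 : ∃ ι : Fin 4 → V, Function.Injective ι ∧
      (∀ a' b' : Fin 4, a' ≠ b' → G.Adj (ι a') (ι b')) ∧
      ∀ a' : Fin 4, ∃ j, j ≤ P.length ∧ P.getVert j = ι a')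
    (h3 : ∃ a₀ b₀ : V, G.Adj a₀ b₀ ∧ ∃ f : V → ℚ, Function.Injective f ∧
      NonCross (G.deleteEdges {s(a₀, b₀)}) f ∧
      ∀ j, j < P.length → f (P.getVert j) < f (P.getVert (j + 1)) ∧
        ∀ w : V, ¬ (f (P.getVert j) < f w ∧ f w < f (P.getVert (j + 1)))) :
    Good ⟨V, G, a, b, P⟩ :=
  ⟨h1, h2, h3⟩

lemma good_base (a b : Fin 4) (P : (⊤ : SimpleGraph (Fin 4)).Walk a b)
    (hP : P.IsHamiltonian) : Good ⟨Fin 4, ⊤, a, b, P⟩ := by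
  classical
  have hlen : P.length = 3 := by
    rw [hP.length_eq]
    simp
  have hpath := hP.isPath
  have hiinj : ∀ i, i ≤ P.length → ∀ j, j ≤ P.length → P.getVert i = P.getVert j → i = j :=
    path_getVert_inj hpath
  have hex : ∀ v : Fin 4, ∃ n, P.getVert n = v ∧ n ≤ P.length := by
    intro v
    exact SimpleGraph.Walk.mem_support_iff_exists_getVert.mp (hP.mem_support v)
  set idx : Fin 4 → ℕ := fun v => (hex v).choose with hidx
  have hidx1 : ∀ v, P.getVert (idx v) = v := fun v => (hex v).choose_spec.1
  have hidx2 : ∀ v, idx v ≤ P.length := fun v => (hex v).choose_spec.2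
  have hidx3 : ∀ n, n ≤ P.length → idx (P.getVert n) = n := by
    intro n hn
    exact hiinj _ (hidx2 _) _ hn (hidx1 _)
  refine good_mk _ _ ⟨inferInstance⟩ ⟨fun i => P.getVert i, ?_, ?_, ?_⟩ ?_
  · intro i j hij
    have hb1 : (i : ℕ) ≤ P.length := by have := i.isLt; omega
    have hb2 : (j : ℕ) ≤ P.length := by have := j.isLt; omega
    exact Fin.val_injective (hiinj i hb1 j hb2 hij)
  · intro i j hij
    rw [SimpleGraph.top_adj]
    intro h
    have hb1 : (i : ℕ) ≤ P.length := by have := i.isLt; omega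
    have hb2 : (j : ℕ) ≤ P.length := by have := j.isLt; omega
    exact hij (Fin.val_injective (hiinj i hb1 j hb2 h))
  · intro i
    exact ⟨i, by have := i.isLt; omega, rfl⟩
  · refine ⟨P.getVert 1, P.getVert 3, ?_, fun v => (idx v : ℚ), ?_, ?_, ?_⟩
    · rw [SimpleGraph.top_adj]
      intro h
      have := hiinj 1 (by omega) 3 (by omega) h
      omega
    · intro v w h
      dsimp only at h
      have : idx v = idx w := by exact_mod_cast h
      rw [← hidx1 v, ← hidx1 w, this]
    · intro p q c d hpq hcd hpat
      obtain ⟨h1, h2, h3⟩ := hpat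
      dsimp only at h1 h2 h3
      have k1 : idx p < idx c := by exact_mod_cast h1
      have k2 : idx c < idx q := by exact_mod_cast h2
      have k3 : idx q < idx d := by exact_mod_cast h3
      have b1 := hidx2 p; have b2 := hidx2 c; have b3 := hidx2 q; have b4 := hidx2 d
      rw [hlen] at b1 b2 b3 b4
      have hc1 : idx c = 1 := by omega
      have hd3 : idx d = 3 := by omega
      have hc : c = P.getVert 1 := by rw [← hidx1 c, hc1]
      have hd : d = P.getVert 3 := by rw [← hidx1 d, hd3]
      rw [SimpleGraph.deleteEdges_adj] at hcd
      exact hcd.2 (by rw [hc, hd]; simp)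
    · intro j hj
      constructor
      · show (idx (P.getVert j) : ℚ) < idx (P.getVert (j + 1))
        rw [hidx3 j (by omega), hidx3 (j + 1) (by omega)]
        exact_mod_cast Nat.lt_succ_self j
      · intro w hw
        obtain ⟨hw1, hw2⟩ := hw
        dsimp only at hw1 hw2
        rw [hidx3 j (by omega)] at hw1
        rw [hidx3 (j + 1) (by omega)] at hw2
        have l1 : j < idx w := by exact_mod_cast hw1
        have l2 : idx w < j + 1 := by exact_mod_cast hw2
        omega

end GoodInvariant
section GoodStep

lemma chain_mono {g : ℕ → ℚ} {L : ℕ} (h : ∀ j, j < L → g j < g (j + 1)) :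
    ∀ i j, i ≤ j → j ≤ L → g i ≤ g j := by
  intro i j hij hjL
  induction j with
  | zero =>
    have : i = 0 := by omega
    simp [this]
  | succ j ih =>
    rcases Nat.eq_or_lt_of_le hij with rfl | hlt
    · exact le_refl _
    · exact (ih (by omega) (by omega)).trans (le_of_lt (h j (by omega)))

lemma sigma_adj_inl {V : Type} (G : SimpleGraph V) {a b : V} (P : G.Walk a b)
    {p q : V} (h : G.Adj p q) : (sigmaGraph G P).Adj (Sum.inl p) (Sum.inl q) := by
  rw [sigmaGraph, SimpleGraph.fromRel_adj]
  exact ⟨by simpa using h.ne, Or.inl (Or.inl ⟨p, q, rfl, rfl, h⟩)⟩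

lemma sigma_adj_new {V : Type} (G : SimpleGraph V) {a b : V} (P : G.Walk a b)
    (i : Fin P.length) (p : V) (hp : p = P.getVert i ∨ p = P.getVert (i + 1)) :
    (sigmaGraph G P).Adj (Sum.inl p) (Sum.inr i) := by
  rw [sigmaGraph, SimpleGraph.fromRel_adj]
  exact ⟨by simp, Or.inl (Or.inr ⟨p, i, rfl, rfl, hp⟩)⟩

lemma sigma_adj_cases {V : Type} {G : SimpleGraph V} {a b : V} {P : G.Walk a b}
    {x y : V ⊕ Fin P.length} (h : (sigmaGraph G P).Adj x y) :
    (∃ p q : V, G.Adj p q ∧ x = Sum.inl p ∧ y = Sum.inl q) ∨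
    (∃ (p : V) (i : Fin P.length), (p = P.getVert i ∨ p = P.getVert (i + 1)) ∧
      ((x = Sum.inl p ∧ y = Sum.inr i) ∨ (x = Sum.inr i ∧ y = Sum.inl p))) := by
  rw [sigmaGraph, SimpleGraph.fromRel_adj] at h
  rcases h.2 with (⟨p, q, hx, hy, hpq⟩ | ⟨p, i, hx, hy, hp⟩) | (⟨p, q, hy, hx, hpq⟩ | ⟨p, i, hy, hx, hp⟩)
  · exact Or.inl ⟨p, q, hpq, hx, hy⟩
  · exact Or.inr ⟨p, i, hp, Or.inl ⟨hx, hy⟩⟩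
  · exact Or.inl ⟨q, p, hpq.symm, hx, hy⟩
  · exact Or.inr ⟨p, i, hp, Or.inr ⟨hx, hy⟩⟩

lemma good_step (X : HGraph) (h : Good X) : Good X.step := by
  classical
  obtain ⟨V, G, a, b, P⟩ := X
  obtain ⟨⟨inst⟩, ⟨ι, hιinj, hιadj, hιidx⟩, ⟨a₀, b₀, hab₀, f, hfinj, hfnc, hgap⟩⟩ := h
  have hmono : ∀ j, j < P.length → f (P.getVert j) < f (P.getVert (j + 1)) :=
    fun j hj => (hgap j hj).1
  have hgapf : ∀ j, j < P.length →
      ∀ w : V, ¬ (f (P.getVert j) < f w ∧ f w < f (P.getVert (j + 1))) :=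
    fun j hj => (hgap j hj).2
  have hch : ∀ i j, i ≤ j → j ≤ P.length → f (P.getVert i) ≤ f (P.getVert j) :=
    chain_mono hmono
  set f' : V ⊕ Fin P.length → ℚ :=
    Sum.elim f (fun i => (f (P.getVert i.1) + f (P.getVert (i.1 + 1))) / 2) with hf'
  have hfl : ∀ v : V, f' (Sum.inl v) = f v := fun v => rfl
  have hmidlo : ∀ i : Fin P.length, f (P.getVert i.1) < f' (Sum.inr i) := by
    intro i
    have := hmono i.1 i.isLt
    show _ < (f (P.getVert i.1) + f (P.getVert (i.1 + 1))) / 2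
    linarith
  have hmidhi : ∀ i : Fin P.length, f' (Sum.inr i) < f (P.getVert (i.1 + 1)) := by
    intro i
    have := hmono i.1 i.isLt
    show (f (P.getVert i.1) + f (P.getVert (i.1 + 1))) / 2 < _
    linarith
  have hintA : ∀ (i : Fin P.length) (z : V ⊕ Fin P.length),
      ¬ (f (P.getVert i.1) < f' z ∧ f' z < f' (Sum.inr i)) := by
    rintro i z ⟨u1, u2⟩
    cases z with
    | inl w => exact hgapf i.1 i.isLt w ⟨u1, lt_trans u2 (hmidhi i)⟩
    | inr j =>
      rcases lt_trichotomy j.1 i.1 with hj | hj | hj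
      · have h1 : f (P.getVert (j.1 + 1)) ≤ f (P.getVert i.1) :=
          hch _ _ (by omega) (by omega)
        have := hmidhi j
        linarith
      · have : j = i := Fin.ext hj
        subst this
        exact absurd u2 (lt_irrefl _)
      · have h1 : f (P.getVert (i.1 + 1)) ≤ f (P.getVert j.1) :=
          hch _ _ (by omega) (by omega)
        have h2 := hmidlo j
        have h3 := hmidhi i
        linarith
  have hintB : ∀ (i : Fin P.length) (z : V ⊕ Fin P.length),
      ¬ (f' (Sum.inr i) < f' z ∧ f' z < f (P.getVert (i.1 + 1))) := by
    rintro i z ⟨u1, u2⟩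
    cases z with
    | inl w => exact hgapf i.1 i.isLt w ⟨lt_trans (hmidlo i) u1, u2⟩
    | inr j =>
      rcases lt_trichotomy j.1 i.1 with hj | hj | hj
      · have h1 : f (P.getVert (j.1 + 1)) ≤ f (P.getVert i.1) :=
          hch _ _ (by omega) (by omega)
        have h2 := hmidhi j
        have h3 := hmidlo i
        linarith
      · have : j = i := Fin.ext hj
        subst this
        exact absurd u1 (lt_irrefl _)
      · have h1 : f (P.getVert (i.1 + 1)) ≤ f (P.getVert j.1) :=
          hch _ _ (by omega) (by omega)
        have h2 := hmidlo j
        linarith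
  have hfinj' : Function.Injective f' := by
    intro x y hxy
    cases x with
    | inl v =>
      cases y with
      | inl w => exact congrArg Sum.inl (hfinj hxy)
      | inr i =>
        exfalso
        rw [hfl] at hxy
        have h1 := hmidlo i
        have h2 := hmidhi i
        exact hgapf i.1 i.isLt v ⟨by rw [← hxy] at h1; exact h1, by rw [← hxy] at h2; exact h2⟩
    | inr i =>
      cases y with
      | inl w =>
        exfalso
        rw [hfl] at hxy
        have h1 := hmidlo i
        have h2 := hmidhi i
        exact hgapf i.1 i.isLt w ⟨by rw [hxy] at h1; exact h1, by rw [hxy] at h2; exact h2⟩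
      | inr j =>
        congr 1
        by_contra hne
        rcases lt_trichotomy i.1 j.1 with hj | hj | hj
        · have h1 : f (P.getVert (i.1 + 1)) ≤ f (P.getVert j.1) :=
            hch _ _ (by omega) (by omega)
          have h2 := hmidhi i
          have h3 := hmidlo j
          rw [hxy] at h2
          linarith
        · exact hne (Fin.ext hj)
        · have h1 : f (P.getVert (j.1 + 1)) ≤ f (P.getVert i.1) :=
            hch _ _ (by omega) (by omega)
          have h2 := hmidhi j
          have h3 := hmidlo i
          rw [hxy] at h3
          linarith
  have hmix : ∀ (p : V) (i : Fin P.length),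
      (p = P.getVert i.1 ∨ p = P.getVert (i.1 + 1)) → ∀ z : V ⊕ Fin P.length,
      (¬ (f' (Sum.inl p) < f' z ∧ f' z < f' (Sum.inr i))) ∧
      (¬ (f' (Sum.inr i) < f' z ∧ f' z < f' (Sum.inl p))) := by
    intro p i hp z
    rcases hp with rfl | rfl
    · refine ⟨hintA i z, ?_⟩
      rintro ⟨u1, u2⟩
      have := hmidlo i
      rw [hfl] at u2
      linarith
    · constructor
      · rintro ⟨u1, u2⟩
        have := hmidhi i
        rw [hfl] at u1
        linarith
      · exact hintB i z
  refine ⟨⟨by haveI : Fintype V := inst; exact inferInstanceAs (Fintype (V ⊕ Fin P.length))⟩,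
    ⟨Sum.inl ∘ ι, Sum.inl_injective.comp hιinj, ?_, ?_⟩,
    ⟨Sum.inl a₀, Sum.inl b₀, sigma_adj_inl G P hab₀, f', hfinj', ?_, ?_⟩⟩
  · intro a' b' hab
    exact sigma_adj_inl G P (hιadj a' b' hab)
  · intro a'
    obtain ⟨j, hj, hgv⟩ := hιidx a'
    refine ⟨2 * j, ?_, ?_⟩
    · rw [step_length]
      omega
    · rw [step_getVert_even _ j hj]
      simp only [Function.comp_apply]
      rw [hgv]
      rfl
  · -- NonCross
    intro α β γ δ hαβ hγδ hpat
    obtain ⟨h1, h2, h3⟩ := hpat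
    rw [SimpleGraph.deleteEdges_adj] at hαβ hγδ
    obtain ⟨hαβ', hαβdel⟩ := hαβ
    obtain ⟨hγδ', hγδdel⟩ := hγδ
    rcases sigma_adj_cases hαβ' with ⟨p₁, q₁, hpq₁, rfl, rfl⟩ | ⟨p, i, hp, (⟨rfl, rfl⟩ | ⟨rfl, rfl⟩)⟩
    · rcases sigma_adj_cases hγδ' with ⟨p₂, q₂, hpq₂, rfl, rfl⟩ | ⟨p, i, hp, (⟨rfl, rfl⟩ | ⟨rfl, rfl⟩)⟩
      · -- both old edges
        have hne₁ : s(p₁, q₁) ∉ ({s(a₀, b₀)} : Set (Sym2 V)) := by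
          intro hmem
          apply hαβdel
          simp only [Set.mem_singleton_iff] at hmem ⊢
          erw [← Sym2.map_pair_eq Sum.inl, hmem, Sym2.map_pair_eq]
          rfl
        have hne₂ : s(p₂, q₂) ∉ ({s(a₀, b₀)} : Set (Sym2 V)) := by
          intro hmem
          apply hγδdel
          simp only [Set.mem_singleton_iff] at hmem ⊢
          erw [← Sym2.map_pair_eq Sum.inl, hmem, Sym2.map_pair_eq]
          rfl
        exact hfnc p₁ q₁ p₂ q₂ (SimpleGraph.deleteEdges_adj.mpr ⟨hpq₁, hne₁⟩)
          (SimpleGraph.deleteEdges_adj.mpr ⟨hpq₂, hne₂⟩) ⟨h1, h2, h3⟩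
      · exact (hmix p i hp (Sum.inl q₁)).1 ⟨h2, h3⟩
      · exact (hmix p i hp (Sum.inl q₁)).2 ⟨h2, h3⟩
    · exact (hmix p i hp γ).1 ⟨h1, h2⟩
    · exact (hmix p i hp γ).2 ⟨h1, h2⟩
  · -- GapFreeMono
    intro j hj
    rw [step_length] at hj
    have hj' : j < 2 * P.length := hj
    clear hj
    rcases Nat.even_or_odd j with ⟨m, hm⟩ | ⟨m, hm⟩
    · have hm' : j = 2 * m := by omega
      subst hm'
      have hmL : m < P.length := by omega
      rw [step_getVert_even _ m (le_of_lt hmL)]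
      have : 2 * m + 1 = 2 * m + 1 := rfl
      rw [step_getVert_odd _ m hmL]
      exact ⟨hmidlo ⟨m, hmL⟩, fun w => hintA ⟨m, hmL⟩ w⟩
    · subst hm
      have hm2 : m < P.length := by omega
      have hmL : m + 1 ≤ P.length := by omega
      rw [step_getVert_odd _ m hm2]
      have he : 2 * m + 1 + 1 = 2 * (m + 1) := by ring
      rw [he, step_getVert_even _ (m + 1) hmL]
      refine ⟨hmidhi ⟨m, hm2⟩, fun w => ?_⟩
      exact hintB ⟨m, hm2⟩ w

end GoodStep
section LowerBound

/-- Lower bound on the number of cross edges for any outerplanar partition. -/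
def LB (X : HGraph) (m : ℕ) : Prop :=
  ∀ f : X.V → ℕ, (∀ i : ℕ, Outerplanar (X.G.induce (f ⁻¹' {i}))) →
    m ≤ (crossEdges X.G f).ncard

lemma lb_base (a b : Fin 4) (P : (⊤ : SimpleGraph (Fin 4)).Walk a b) :
    LB ⟨Fin 4, ⊤, a, b, P⟩ 2 := by
  classical
  intro f hparts
  have hnc : ∃ v w : Fin 4, f v ≠ f w := by
    by_contra hcon
    push_neg at hcon
    refine not_outerplanar_of_K4_hom (G := (⊤ : SimpleGraph (Fin 4)).induce (f ⁻¹' {f 0}))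
      (fun v => ⟨v, hcon v 0⟩) ?_ ?_ (hparts (f 0))
    · intro v w h
      exact congrArg Subtype.val h
    · intro a' b' hab
      rw [SimpleGraph.comap_adj, SimpleGraph.top_adj]
      exact hab
  obtain ⟨v, w, hvw⟩ := hnc
  have hvw' : v ≠ w := fun h => hvw (by rw [h])
  obtain ⟨x, hxv, hxw⟩ : ∃ x : Fin 4, x ≠ v ∧ x ≠ w := by
    have : ∀ v w : Fin 4, ∃ x, x ≠ v ∧ x ≠ w := by decide
    exact this v w
  have e1mem : s(v, w) ∈ crossEdges (⊤ : SimpleGraph (Fin 4)) f :=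
    ⟨(SimpleGraph.mem_edgeSet _).mpr (by rw [SimpleGraph.top_adj]; exact hvw'), v, w, rfl, hvw⟩
  rcases ne_or_eq (f x) (f v) with hx | hx
  · have e2mem : s(x, v) ∈ crossEdges (⊤ : SimpleGraph (Fin 4)) f :=
      ⟨(SimpleGraph.mem_edgeSet _).mpr (by rw [SimpleGraph.top_adj]; exact hxv), x, v, rfl, hx⟩
    have hne : s(x, v) ≠ s(v, w) := by
      intro h
      rcases Sym2.eq_iff.mp h with ⟨h1, h2⟩ | ⟨h1, h2⟩
      · exact hxv h1
      · exact hxw h1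
    calc 2 = ({s(x, v), s(v, w)} : Set (Sym2 (Fin 4))).ncard := (Set.ncard_pair hne).symm
    _ ≤ (crossEdges (⊤ : SimpleGraph (Fin 4)) f).ncard := by
        apply Set.ncard_le_ncard ?_ (Set.toFinite _)
        rintro e (rfl | rfl)
        · exact e2mem
        · exact e1mem
  · have hx2 : f x ≠ f w := by rw [hx]; exact hvw
    have e2mem : s(x, w) ∈ crossEdges (⊤ : SimpleGraph (Fin 4)) f :=
      ⟨(SimpleGraph.mem_edgeSet _).mpr (by rw [SimpleGraph.top_adj]; exact hxw), x, w, rfl, hx2⟩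
    have hne : s(x, w) ≠ s(v, w) := by
      intro h
      rcases Sym2.eq_iff.mp h with ⟨h1, h2⟩ | ⟨h1, h2⟩
      · exact hxv h1
      · exact hxw h1
    calc 2 = ({s(x, w), s(v, w)} : Set (Sym2 (Fin 4))).ncard := (Set.ncard_pair hne).symm
    _ ≤ (crossEdges (⊤ : SimpleGraph (Fin 4)) f).ncard := by
        apply Set.ncard_le_ncard ?_ (Set.toFinite _)
        rintro e (rfl | rfl)
        · exact e2mem
        · exact e1mem

lemma lb_step (X : HGraph) (hX : Good X) {m : ℕ} (hLB : LB X m) : LB X.step (m + 1) := by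
  classical
  obtain ⟨V, G, a, b, P⟩ := X
  obtain ⟨⟨inst⟩, ⟨ι, hιinj, hιadj, hιidx⟩, -⟩ := hX
  haveI : Fintype V := inst
  intro f hparts
  set g : V → ℕ := fun v => f (Sum.inl v) with hg
  have hpartsg : ∀ i : ℕ, Outerplanar (G.induce (g ⁻¹' {i})) := by
    intro i
    refine outerplanar_mono ⟨fun x => ⟨Sum.inl x.1, x.2⟩, ?_⟩ ?_ (hparts i)
    · rintro ⟨x, hx⟩ ⟨y, hy⟩ hxy
      rw [SimpleGraph.comap_adj] at hxy ⊢
      exact sigma_adj_inl G P hxy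
    · rintro ⟨x, hx⟩ ⟨y, hy⟩ h
      exact Subtype.ext (Sum.inl_injective (congrArg Subtype.val h))
  have hold : m ≤ (crossEdges G g).ncard := hLB g hpartsg
  by_cases hc : ∀ i : Fin P.length, f (Sum.inr i) = f (Sum.inl (P.getVert i.1)) ∧
      f (Sum.inr i) = f (Sum.inl (P.getVert (i.1 + 1)))
  · exfalso
    have hconst : ∀ j, j ≤ P.length → f (Sum.inl (P.getVert j)) = f (Sum.inl (P.getVert 0)) := by
      intro j
      induction j with
      | zero => intro _; rfl
      | succ j ih =>
        intro hj
        have hjlt : j < P.length := by omega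
        have h1 := (hc ⟨j, hjlt⟩).1
        have h2 := (hc ⟨j, hjlt⟩).2
        rw [← h2, h1]
        exact ih (by omega)
    have hmem : ∀ a' : Fin 4, f (Sum.inl (ι a')) = f (Sum.inl (P.getVert 0)) := by
      intro a'
      obtain ⟨j, hj, hgv⟩ := hιidx a'
      rw [← hgv]
      exact hconst j hj
    refine not_outerplanar_of_K4_hom
      (G := (sigmaGraph G P).induce (f ⁻¹' {f (Sum.inl (P.getVert 0))}))
      (fun a' => ⟨Sum.inl (ι a'), hmem a'⟩) ?_ ?_ (hparts (f (Sum.inl (P.getVert 0))))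
    · intro a₁ a₂ h
      exact hιinj (Sum.inl_injective (congrArg Subtype.val h))
    · intro a' b' hab
      erw [SimpleGraph.comap_adj]
      exact sigma_adj_inl G P (hιadj a' b' hab)
  · obtain ⟨i, hi⟩ := not_forall.mp hc
    obtain ⟨p, hp, hfp⟩ : ∃ p : V, (p = P.getVert i.1 ∨ p = P.getVert (i.1 + 1)) ∧
        f (Sum.inl p) ≠ f (Sum.inr i) := by
      rcases not_and_or.mp hi with hA | hB
      · exact ⟨P.getVert i.1, Or.inl rfl, fun h => hA h.symm⟩
      · exact ⟨P.getVert (i.1 + 1), Or.inr rfl, fun h => hB h.symm⟩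
    set e' : Sym2 (V ⊕ Fin P.length) := s(Sum.inl p, Sum.inr i) with he'
    set A : Set (Sym2 (V ⊕ Fin P.length)) := Sym2.map Sum.inl '' crossEdges G g with hA
    have hAsub : A ⊆ crossEdges (sigmaGraph G P) f := by
      rintro e ⟨e₀, he₀, rfl⟩
      obtain ⟨he1, u, v, heq, hne⟩ := he₀
      subst heq
      rw [Sym2.map_pair_eq]
      exact ⟨(SimpleGraph.mem_edgeSet _).mpr (sigma_adj_inl G P ((SimpleGraph.mem_edgeSet _).mp he1)),
        Sum.inl u, Sum.inl v, rfl, hne⟩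
    have he'A : e' ∉ A := by
      rintro ⟨e₀, -, heq⟩
      induction e₀ using Sym2.ind with
      | _ u v =>
        rw [Sym2.map_pair_eq] at heq
        rcases Sym2.eq_iff.mp heq with ⟨h1, h2⟩ | ⟨h1, h2⟩
        · exact absurd h2 (by simp)
        · exact absurd h1 (by simp)
    have he'mem : e' ∈ crossEdges (sigmaGraph G P) f :=
      ⟨(SimpleGraph.mem_edgeSet _).mpr (sigma_adj_new G P i p hp), Sum.inl p, Sum.inr i, rfl, hfp⟩
    have h1 : (insert e' A).ncard = A.ncard + 1 :=
      Set.ncard_insert_of_notMem he'A (Set.toFinite _)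
    have h2 : A.ncard = (crossEdges G g).ncard :=
      Set.ncard_image_of_injective _ (Sym2.map.injective Sum.inl_injective)
    have h3 : insert e' A ⊆ crossEdges (sigmaGraph G P) f := by
      rw [Set.insert_subset_iff]
      exact ⟨he'mem, hAsub⟩
    have h4 : (insert e' A).ncard ≤ (crossEdges (sigmaGraph G P) f).ncard :=
      Set.ncard_le_ncard h3 (Set.toFinite _)
    show m + 1 ≤ (crossEdges (sigmaGraph G P) f).ncard
    omega

lemma editDist_good (X : HGraph) (h : Good X) : editDist OuterplanarClass X.G = 1 := by
  classical
  obtain ⟨V, G, a, b, P⟩ := X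
  obtain ⟨⟨inst⟩, ⟨ι, hιinj, hιadj, hιidx⟩, ⟨a₀, b₀, hab₀, f, hfinj, hfnc, hgap⟩⟩ := h
  haveI : Fintype V := inst
  apply le_antisymm
  · apply sInf_le
    refine ⟨{s(a₀, b₀)}, ?_, ?_, ?_⟩
    · rw [Set.singleton_subset_iff]
      exact (SimpleGraph.mem_edgeSet _).mpr hab₀
    · show Outerplanar _
      exact onePage_outerplanar ⟨f, hfinj, hfnc⟩
    · rw [Set.ncard_singleton]
      rfl
  · apply le_sInf
    rintro n ⟨F, hF, hop, rfl⟩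
    have hFfin : F.Finite := Set.Finite.subset (Set.toFinite _) hF
    rcases Nat.eq_zero_or_pos F.ncard with h0 | h0
    · exfalso
      have hFempty : F = ∅ := (Set.ncard_eq_zero hFfin).mp h0
      rw [hFempty, SimpleGraph.deleteEdges_empty] at hop
      exact not_outerplanar_of_K4_hom ι hιinj hιadj hop
    · exact_mod_cast h0

lemma brittleness_good (X : HGraph) {m : ℕ} (hLB : LB X m) :
    (m : ℕ∞) ≤ edgeBrittleness OuterplanarClass X.G := by
  apply le_sInf
  rintro n ⟨f, hparts, rfl⟩
  exact_mod_cast hLB f (fun i => hparts i)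

lemma main_result (a b : Fin 4) (P₁ : (⊤ : SimpleGraph (Fin 4)).Walk a b)
    (hP : P₁.IsHamiltonian) (k : ℕ) :
    Good (HGraph.step^[k] ⟨Fin 4, ⊤, a, b, P₁⟩) ∧
      LB (HGraph.step^[k] ⟨Fin 4, ⊤, a, b, P₁⟩) (k + 2) := by
  induction k with
  | zero => exact ⟨good_base a b P₁ hP, lb_base a b P₁⟩
  | succ k ih =>
    rw [Function.iterate_succ_apply']
    refine ⟨good_step _ ih.1, ?_⟩
    have h := lb_step _ ih.1 ih.2
    have he : k + 1 + 2 = k + 2 + 1 := by omega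
    rw [he]
    exact h

end LowerBound

/-- For every positive `ℓ` there is a graph `G` with `e_𝒪(G) = 1` and
`η_𝒪(G) ≥ ℓ`; concretely, for `G₁ = K₄` with a Hamiltonian path `P₁` and
`(G_ℓ, P_ℓ) = σ(G_{ℓ-1}, P_{ℓ-1})`, we have `e_𝒪(G_ℓ) = 1` and `η_𝒪(G_ℓ) ≥ ℓ + 1`. -/
theorem outerplanar_example (ℓ : ℕ) (hℓ : 0 < ℓ) :
    (∃ (V : Type) (_ : Fintype V) (G : SimpleGraph V),
      editDist OuterplanarClass G = 1 ∧ (ℓ : ℕ∞) ≤ edgeBrittleness OuterplanarClass G) ∧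
    (∀ (a b : Fin 4) (P₁ : (⊤ : SimpleGraph (Fin 4)).Walk a b), P₁.IsHamiltonian →
      editDist OuterplanarClass ((HGraph.step^[ℓ - 1] ⟨Fin 4, ⊤, a, b, P₁⟩).G) = 1 ∧
      ((ℓ : ℕ∞) + 1) ≤
        edgeBrittleness OuterplanarClass ((HGraph.step^[ℓ - 1] ⟨Fin 4, ⊤, a, b, P₁⟩).G)) := by
  have main : ∀ (a b : Fin 4) (P₁ : (⊤ : SimpleGraph (Fin 4)).Walk a b), P₁.IsHamiltonian →
      editDist OuterplanarClass ((HGraph.step^[ℓ - 1] ⟨Fin 4, ⊤, a, b, P₁⟩).G) = 1 ∧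
      ((ℓ : ℕ∞) + 1) ≤
        edgeBrittleness OuterplanarClass ((HGraph.step^[ℓ - 1] ⟨Fin 4, ⊤, a, b, P₁⟩).G) := by
    intro a b P₁ hP
    obtain ⟨hg, hlb⟩ := main_result a b P₁ hP (ℓ - 1)
    refine ⟨editDist_good _ hg, ?_⟩
    have hbr := brittleness_good _ hlb
    have hcast : ((ℓ - 1 + 2 : ℕ) : ℕ∞) = (ℓ : ℕ∞) + 1 := by
      have he : ℓ - 1 + 2 = ℓ + 1 := by omega
      rw [he]
      push_cast
      rfl
    rwa [hcast] at hbr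
  refine ⟨?_, main⟩
  have h01 : (⊤ : SimpleGraph (Fin 4)).Adj 0 1 := by rw [SimpleGraph.top_adj]; decide
  have h12 : (⊤ : SimpleGraph (Fin 4)).Adj 1 2 := by rw [SimpleGraph.top_adj]; decide
  have h23 : (⊤ : SimpleGraph (Fin 4)).Adj 2 3 := by rw [SimpleGraph.top_adj]; decide
  let P₁ : (⊤ : SimpleGraph (Fin 4)).Walk 0 3 :=
    SimpleGraph.Walk.cons h01 (SimpleGraph.Walk.cons h12 (SimpleGraph.Walk.cons h23
      SimpleGraph.Walk.nil))
  have hsupp : P₁.support = [0, 1, 2, 3] := rfl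
  have hham : P₁.IsHamiltonian := by
    intro v
    rw [hsupp]
    fin_cases v <;> decide
  obtain ⟨hED, hB⟩ := main 0 3 P₁ hham
  obtain ⟨⟨hfin⟩, -, -⟩ := (main_result 0 3 P₁ hham (ℓ - 1)).1
  exact ⟨_, hfin, _, hED, le_trans le_self_add hB⟩
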